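/- Let L and L' be broken paracycles and let f: L → L' be a continuous map that is ℝ-equivariant, i.e., f(t·x) = t·f(x) for all t ∈ ℝ and x ∈ L. Then f is weakly order-preserving: x ≤ y in L implies f(x) ≤ f(y) in L'. -/
import Mathlib


open Topology

noncomputable section

/-! ### Broken paracycles -/

/-- Data of a `ℤ × ℝ`-action and an order on a space. -/
structure ParaData (L : Type*) where
  act : ℤ × ℝ → L → L
  le : L → L → Prop

namespace ParaData

/-- The set of `ℝ`-fixed points. -/
def rFixed {L : Type*} (D : ParaData L) : Set L := {x | ∀ t : ℝ, D.act (0, t) x = x}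

/-- Definition of a broken paracycle. -/
structure IsBrokenParacycle {L : Type*} [TopologicalSpace L] (D : ParaData L) : Prop where
  act_zero : ∀ x, D.act 0 x = x
  act_add : ∀ g h x, D.act (g + h) x = D.act g (D.act h x)
  act_cont : Continuous fun p : (ℤ × ℝ) × L => D.act p.1 p.2
  exists_homeo : ∃ φ : L ≃ₜ ℝ, ∀ x y, D.le x y ↔ φ x ≤ φ y
  z_free : ∀ (n : ℤ) (x : L), D.act (n, 0) x = x → n = 0
  r_directed : ∀ t : ℝ, 0 ≤ t → ∀ x, D.le x (D.act (0, t) x)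
  z_directed : ∀ x, D.le x (D.act (1, 0) x)
  fixed_discrete : DiscreteTopology D.rFixed
  fixed_nonempty : D.rFixed.Nonempty

open Classical in
/-- The translation distance on a broken paracycle, valued in `[-∞,∞]`. -/
noncomputable def dist {L : Type*} (D : ParaData L) (x y : L) : EReal :=
  if h : ∃ t : ℝ, D.act (0, t) x = y then ((h.choose : ℝ) : EReal)
  else if D.le x y then ⊤ else ⊥

end ParaData

/-! ### Auxiliary lemmas about flows on `ℝ` -/

namespace BPAux

variable {A B : ℝ → ℝ → ℝ} {F : ℝ → ℝ}

/-- A point with a nontrivial period is a fixed point of the whole flow. -/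
lemma per_fix (h0 : ∀ s, A 0 s = s) (hadd : ∀ t u s, A (t + u) s = A t (A u s))
    (hle : ∀ t s, 0 ≤ t → s ≤ A t s) {s c : ℝ} (hc : A c s = s) (hc0 : c ≠ 0) :
    ∀ t, A t s = s := by
  have main : ∀ c : ℝ, 0 < c → A c s = s → ∀ t, A t s = s := by
    intro c hcpos hc
    have step1 : ∀ t, 0 ≤ t → t ≤ c → A t s = s := by
      intro t ht htc
      have h1 : s ≤ A t s := hle t s ht
      have h3 : A (c - t) (A t s) = s := by
        rw [← hadd, show c - t + t = c by ring]; exact hc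
      have h2 : A t s ≤ s := by
        have h4 := hle (c - t) (A t s) (by linarith)
        rwa [h3] at h4
      exact le_antisymm h2 h1
    have stepn : ∀ n : ℕ, ∀ t, 0 ≤ t → t ≤ n * c → A t s = s := by
      intro n
      induction n with
      | zero =>
        intro t ht htc
        have : t = 0 := le_antisymm (by simpa using htc) ht
        rw [this]; exact h0 s
      | succ n ih =>
        intro t ht htc
        by_cases h : t ≤ c
        · exact step1 t ht h
        · push_neg at h
          have h4 : A (t - c) (A c s) = A t s := by
            rw [← hadd, show t - c + c = t by ring]
          rw [← h4, hc]
          refine ih (t - c) (by linarith) ?_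
          push_cast at htc ⊢
          linarith
    have pos : ∀ t, 0 ≤ t → A t s = s := by
      intro t ht
      obtain ⟨n, hn⟩ := exists_nat_gt (t / c)
      refine stepn n t ht ?_
      rw [div_lt_iff₀ hcpos] at hn
      linarith
    intro t
    rcases le_or_gt 0 t with ht | ht
    · exact pos t ht
    · have h5 : A (-t) s = s := pos (-t) (by linarith)
      calc A t s = A t (A (-t) s) := by rw [h5]
        _ = A (t + -t) s := (hadd _ _ _).symm
        _ = s := by rw [add_neg_cancel]; exact h0 s
  rcases lt_trichotomy c 0 with h | h | h
  · have hnc : A (-c) s = s := by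
      calc A (-c) s = A (-c) (A c s) := by rw [hc]
        _ = A (-c + c) s := (hadd _ _ _).symm
        _ = s := by rw [neg_add_cancel]; exact h0 s
    exact main (-c) (by linarith) hnc
  · exact absurd h hc0
  · exact main c h hc

/-- The orbit map of a non-fixed point is strictly monotone. -/
lemma orbit_strictMono (h0 : ∀ s, A 0 s = s) (hadd : ∀ t u s, A (t + u) s = A t (A u s))
    (hle : ∀ t s, 0 ≤ t → s ≤ A t s) {s : ℝ} (hs : ¬ ∀ t, A t s = s) :
    StrictMono fun t => A t s := by
  have mono : Monotone fun t => A t s := by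
    intro t u htu
    have h1 : A t s ≤ A (u - t) (A t s) := hle _ _ (by linarith)
    rwa [← hadd, show u - t + t = u by ring] at h1
  refine mono.strictMono_of_injective ?_
  intro t u htu
  simp only at htu
  by_contra hne
  apply hs
  refine per_fix h0 hadd hle (c := t - u) ?_ (sub_ne_zero.2 hne)
  have e1 : A (t - u) s = A (-u) (A t s) := by
    rw [show t - u = -u + t by ring, hadd]
  have e2 : A (-u) (A u s) = s := by
    rw [← hadd, neg_add_cancel]; exact h0 s
  rw [e1, htu, e2]

/-- The orbit of a non-fixed point is open. -/
lemma orbit_open (h0 : ∀ s, A 0 s = s) (hadd : ∀ t u s, A (t + u) s = A t (A u s))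
    (hcont : ∀ s, Continuous fun t => A t s)
    (hle : ∀ t s, 0 ≤ t → s ≤ A t s) {s : ℝ} (hs : ¬ ∀ t, A t s = s) :
    IsOpen (Set.range fun t => A t s) := by
  have hsm := orbit_strictMono h0 hadd hle hs
  rw [isOpen_iff_mem_nhds]
  rintro x ⟨t, rfl⟩
  have h1 : Set.Ioo (A (t - 1) s) (A (t + 1) s) ∈ 𝓝 (A t s) :=
    Ioo_mem_nhds (hsm (by linarith)) (hsm (by linarith))
  refine Filter.mem_of_superset h1 ?_
  have h2 := intermediate_value_Ioo (show t - 1 ≤ t + 1 by linarith)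
    ((hcont s).continuousOn (s := Set.Icc (t - 1) (t + 1)))
  exact h2.trans (Set.image_subset_range _ _)

/-- Orbits of points on the same orbit coincide. -/
lemma orbit_eq (hadd : ∀ t u s, A (t + u) s = A t (A u s)) {s s' : ℝ}
    (h : s' ∈ Set.range fun t => A t s) :
    (Set.range fun t => A t s') = Set.range fun t => A t s := by
  obtain ⟨r, rfl⟩ := h
  ext z
  constructor
  · rintro ⟨u, rfl⟩
    exact ⟨u + r, hadd u r s⟩
  · rintro ⟨u, rfl⟩
    refine ⟨u - r, ?_⟩
    show A (u - r) (A r s) = A u s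
    rw [← hadd, show u - r + r = u by ring]

/-- Non-fixedness is preserved along the orbit. -/
lemma orbit_nonfix (h0 : ∀ s, A 0 s = s) (hadd : ∀ t u s, A (t + u) s = A t (A u s))
    {s : ℝ} (hs : ¬ ∀ t, A t s = s) (r : ℝ) : ¬ ∀ t, A t (A r s) = A r s := by
  intro hfix
  apply hs
  intro t
  have hs0 : A r s = s := by
    have h1 := hfix (-r)
    rw [← hadd, neg_add_cancel, h0] at h1
    exact h1.symm
  have h2 : A t s = A (t - r) (A r s) := by
    rw [← hadd, show t - r + r = t by ring]
  rw [h2, hfix (t - r), hs0]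

/-- A fixed-point free open interval is contained in a single orbit. -/
lemma interval_in_orbit (h0 : ∀ s, A 0 s = s) (hadd : ∀ t u s, A (t + u) s = A t (A u s))
    (hcont : ∀ s, Continuous fun t => A t s) (hle : ∀ t s, 0 ≤ t → s ≤ A t s)
    {a b : ℝ} (hfree : ∀ q ∈ Set.Ioo a b, ¬ ∀ t, A t q = q) {s0 : ℝ}
    (hs0 : s0 ∈ Set.Ioo a b) :
    Set.Ioo a b ⊆ Set.range fun t => A t s0 := by
  have hs0f := hfree s0 hs0
  have hou : IsOpen (Set.range fun t => A t s0) := orbit_open h0 hadd hcont hle hs0f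
  set v : Set ℝ := {z | (¬ ∀ t, A t z = z) ∧ z ∉ Set.range fun t => A t s0} with hv
  have hov : IsOpen v := by
    rw [isOpen_iff_forall_mem_open]
    intro z hz
    refine ⟨Set.range fun t => A t z, ?_, orbit_open h0 hadd hcont hle hz.1, ⟨0, h0 z⟩⟩
    rintro w ⟨r, rfl⟩
    refine ⟨orbit_nonfix h0 hadd hz.1 r, fun hw => hz.2 ?_⟩
    have e1 := orbit_eq hadd (⟨r, rfl⟩ : A r z ∈ Set.range fun t => A t z)
    have e2 := orbit_eq hadd hw
    have hmem : z ∈ Set.range fun t => A t (A r z) := by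
      rw [e1]; exact ⟨0, h0 z⟩
    rw [e2] at hmem
    exact hmem
  have hdisj : Disjoint (Set.range fun t => A t s0) v :=
    Set.disjoint_left.2 fun z hzu hzv => hzv.2 hzu
  have hsub : Set.Ioo a b ⊆ (Set.range fun t => A t s0) ∪ v := by
    intro z hz
    by_cases h : z ∈ Set.range fun t => A t s0
    · exact Or.inl h
    · exact Or.inr ⟨hfree z hz, h⟩
  rcases isPreconnected_Ioo.subset_or_subset hou hov hdisj hsub with h | h
  · exact h
  · exact absurd ⟨0, h0 s0⟩ (h hs0).2

/-- The map `F` is monotone on each orbit. -/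
lemma mono_on_orbit (h0 : ∀ s, A 0 s = s) (hadd : ∀ t u s, A (t + u) s = A t (A u s))
    (hle : ∀ t s, 0 ≤ t → s ≤ A t s)
    (hBadd : ∀ t u s, B (t + u) s = B t (B u s)) (hBle : ∀ t s, 0 ≤ t → s ≤ B t s)
    (heq : ∀ t s, F (A t s) = B t (F s)) {s : ℝ} (hs : ¬ ∀ t, A t s = s) :
    MonotoneOn F (Set.range fun t => A t s) := by
  have hsm := orbit_strictMono h0 hadd hle hs
  rintro x ⟨t, rfl⟩ y ⟨u, rfl⟩ hxy
  have htu : t ≤ u := hsm.le_iff_le.1 hxy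
  rw [heq, heq]
  have h1 : B t (F s) ≤ B (u - t) (B t (F s)) := hBle _ _ (by linarith)
  rwa [← hBadd, show u - t + t = u by ring] at h1

/-- Local monotonicity of `F`. -/
lemma local_mono (h0 : ∀ s, A 0 s = s) (hadd : ∀ t u s, A (t + u) s = A t (A u s))
    (hcont : ∀ s, Continuous fun t => A t s) (hle : ∀ t s, 0 ≤ t → s ≤ A t s)
    (hBadd : ∀ t u s, B (t + u) s = B t (B u s)) (hBle : ∀ t s, 0 ≤ t → s ≤ B t s)
    (hF : Continuous F) (heq : ∀ t s, F (A t s) = B t (F s))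
    (hdisc : ∀ p, (∀ t, A t p = p) →
      ∃ ε > 0, ∀ q ∈ Set.Ioo (p - ε) (p + ε), (∀ t, A t q = q) → q = p) :
    ∀ p : ℝ, ∃ ε > 0, MonotoneOn F (Set.Ioo (p - ε) (p + ε)) := by
  intro p
  by_cases hp : ∀ t, A t p = p
  · obtain ⟨ε, hε, hεp⟩ := hdisc p hp
    have hfreeL : ∀ q ∈ Set.Ioo (p - ε) p, ¬ ∀ t, A t q = q := by
      intro q hq hfix
      have h1 : q = p := hεp q ⟨hq.1, by linarith [hq.2]⟩ hfix
      linarith [hq.2]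
    have hfreeR : ∀ q ∈ Set.Ioo p (p + ε), ¬ ∀ t, A t q = q := by
      intro q hq hfix
      have h1 : q = p := hεp q ⟨by linarith [hq.1], hq.2⟩ hfix
      linarith [hq.1]
    have hL : MonotoneOn F (Set.Ioo (p - ε) p) := by
      have hmem : p - ε / 2 ∈ Set.Ioo (p - ε) p := ⟨by linarith, by linarith⟩
      exact (mono_on_orbit h0 hadd hle hBadd hBle heq (hfreeL _ hmem)).mono
        (interval_in_orbit h0 hadd hcont hle hfreeL hmem)
    have hR : MonotoneOn F (Set.Ioo p (p + ε)) := by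
      have hmem : p + ε / 2 ∈ Set.Ioo p (p + ε) := ⟨by linarith, by linarith⟩
      exact (mono_on_orbit h0 hadd hle hBadd hBle heq (hfreeR _ hmem)).mono
        (interval_in_orbit h0 hadd hcont hle hfreeR hmem)
    have hLp : ∀ q ∈ Set.Ioo (p - ε) p, F q ≤ F p := by
      intro q hq
      have htd : Filter.Tendsto F (𝓝[<] p) (𝓝 (F p)) :=
        (hF.tendsto p).mono_left nhdsWithin_le_nhds
      refine ge_of_tendsto htd ?_
      filter_upwards [Ioo_mem_nhdsLT_of_mem (show p ∈ Set.Ioc q p from ⟨hq.2, le_refl p⟩)]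
        with x hx
      exact hL hq ⟨hq.1.trans hx.1, hx.2⟩ hx.1.le
    have hRp : ∀ q ∈ Set.Ioo p (p + ε), F p ≤ F q := by
      intro q hq
      have htd : Filter.Tendsto F (𝓝[>] p) (𝓝 (F p)) :=
        (hF.tendsto p).mono_left nhdsWithin_le_nhds
      refine le_of_tendsto htd ?_
      filter_upwards [Ioo_mem_nhdsGT_of_mem (show p ∈ Set.Ico p q from ⟨le_refl p, hq.1⟩)]
        with x hx
      exact hR ⟨hx.1, hx.2.trans hq.2⟩ hq hx.2.le
    refine ⟨ε, hε, ?_⟩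
    intro x hx y hy hxy
    rcases lt_trichotomy x p with h1 | h1 | h1 <;> rcases lt_trichotomy y p with h2 | h2 | h2
    · exact hL ⟨hx.1, h1⟩ ⟨hy.1, h2⟩ hxy
    · rw [h2]; exact hLp x ⟨hx.1, h1⟩
    · exact (hLp x ⟨hx.1, h1⟩).trans (hRp y ⟨h2, hy.2⟩)
    · linarith
    · rw [h1, h2]
    · rw [h1]; exact hRp y ⟨h2, hy.2⟩
    · linarith
    · linarith
    · exact hR ⟨h1, hx.2⟩ ⟨h2, hy.2⟩ hxy
  · have hop := orbit_open h0 hadd hcont hle hp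
    obtain ⟨ε, hε, hball⟩ := Metric.isOpen_iff.1 hop p ⟨0, h0 p⟩
    refine ⟨ε, hε, (mono_on_orbit h0 hadd hle hBadd hBle heq hp).mono ?_⟩
    rw [← Real.ball_eq_Ioo]
    exact hball

/-- Globalization of local monotonicity. -/
lemma global_mono (hloc : ∀ p : ℝ, ∃ ε > 0, MonotoneOn F (Set.Ioo (p - ε) (p + ε))) :
    Monotone F := by
  intro a b hab
  set S : Set ℝ := {y | y ∈ Set.Icc a b ∧ MonotoneOn F (Set.Icc a y)} with hS
  have haS : a ∈ S := by
    refine ⟨⟨le_refl a, hab⟩, ?_⟩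
    intro x hx y hy _
    have hx' : x = a := le_antisymm hx.2 hx.1
    have hy' : y = a := le_antisymm hy.2 hy.1
    rw [hx', hy']
  have hbdd : BddAbove S := ⟨b, fun y hy => hy.1.2⟩
  set c := sSup S with hc
  have hac : a ≤ c := le_csSup hbdd haS
  have hcb : c ≤ b := csSup_le ⟨a, haS⟩ fun y hy => hy.1.2
  obtain ⟨ε, hε, hmono⟩ := hloc c
  obtain ⟨y, hyS, hyc⟩ := exists_lt_of_lt_csSup ⟨a, haS⟩ (show c - ε < sSup S by rw [← hc]; linarith)
  have hyle : y ≤ c := le_csSup hbdd hyS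
  have claim : ∀ d, a ≤ d → d ≤ b → d < c + ε → MonotoneOn F (Set.Icc a d) := by
    intro d _ _ hdc x hx z hz hxz
    by_cases hzy : z ≤ y
    · exact hyS.2 ⟨hx.1, hxz.trans hzy⟩ ⟨hz.1, hzy⟩ hxz
    · push_neg at hzy
      have hzI : z ∈ Set.Ioo (c - ε) (c + ε) := ⟨by linarith, lt_of_le_of_lt hz.2 hdc⟩
      have hyI : y ∈ Set.Ioo (c - ε) (c + ε) := ⟨hyc, by linarith⟩
      by_cases hxy : x ≤ y
      · exact (hyS.2 ⟨hx.1, hxy⟩ ⟨hyS.1.1, le_refl y⟩ hxy).trans (hmono hyI hzI hzy.le)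
      · push_neg at hxy
        exact hmono ⟨by linarith, lt_of_le_of_lt hx.2 hdc⟩ hzI hxz
  by_cases hbc : b < c + ε
  · exact claim b hab (le_refl b) hbc ⟨le_refl a, hab⟩ ⟨hab, le_refl b⟩ hab
  · push_neg at hbc
    exfalso
    have hmemS : c + ε / 2 ∈ S :=
      ⟨⟨by linarith, by linarith⟩, claim (c + ε / 2) (by linarith) (by linarith) (by linarith)⟩
    have := le_csSup hbdd hmemS
    rw [← hc] at this
    linarith

/-- Key lemma: everything combined on `ℝ`. -/
lemma key (h0 : ∀ s, A 0 s = s) (hadd : ∀ t u s, A (t + u) s = A t (A u s))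
    (hcont : ∀ s, Continuous fun t => A t s) (hle : ∀ t s, 0 ≤ t → s ≤ A t s)
    (hBadd : ∀ t u s, B (t + u) s = B t (B u s)) (hBle : ∀ t s, 0 ≤ t → s ≤ B t s)
    (hF : Continuous F) (heq : ∀ t s, F (A t s) = B t (F s))
    (hdisc : ∀ p, (∀ t, A t p = p) →
      ∃ ε > 0, ∀ q ∈ Set.Ioo (p - ε) (p + ε), (∀ t, A t q = q) → q = p) :
    Monotone F :=
  global_mono (local_mono h0 hadd hcont hle hBadd hBle hF heq hdisc)

end BPAux

/-- A continuous `ℝ`-equivariant map of broken paracycles is weakly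
order-preserving. -/
theorem rEquivariant_weakly_order_preserving {L L' : Type*}
    [TopologicalSpace L] [TopologicalSpace L']
    (D : ParaData L) (D' : ParaData L')
    (hD : D.IsBrokenParacycle) (hD' : D'.IsBrokenParacycle)
    (f : L → L') (hf : Continuous f)
    (heq : ∀ (t : ℝ) (x : L), f (D.act (0, t) x) = D'.act (0, t) (f x)) :
    ∀ x y : L, D.le x y → D'.le (f x) (f y) := by
  obtain ⟨φ, hφ⟩ := hD.exists_homeo
  obtain ⟨ψ, hψ⟩ := hD'.exists_homeo
  set A : ℝ → ℝ → ℝ := fun t s => φ (D.act (0, t) (φ.symm s)) with hA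
  set B : ℝ → ℝ → ℝ := fun t s => ψ (D'.act (0, t) (ψ.symm s)) with hB
  set F : ℝ → ℝ := fun s => ψ (f (φ.symm s)) with hFdef
  have h0 : ∀ s, A 0 s = s := by
    intro s
    show φ (D.act ((0 : ℤ), (0 : ℝ)) (φ.symm s)) = s
    rw [Prod.mk_zero_zero, hD.act_zero, Homeomorph.apply_symm_apply]
  have hadd : ∀ t u s, A (t + u) s = A t (A u s) := by
    intro t u s
    show φ (D.act (0, t + u) (φ.symm s)) =
      φ (D.act (0, t) (φ.symm (φ (D.act (0, u) (φ.symm s)))))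
    rw [Homeomorph.symm_apply_apply,
      show ((0 : ℤ), t + u) = ((0 : ℤ), t) + ((0 : ℤ), u) by rw [Prod.mk_add_mk, add_zero],
      hD.act_add]
  have hcont : ∀ s, Continuous fun t => A t s := by
    intro s
    exact φ.continuous.comp (hD.act_cont.comp
      ((continuous_const.prodMk continuous_id).prodMk continuous_const))
  have hle : ∀ t s, 0 ≤ t → s ≤ A t s := by
    intro t s ht
    have h1 := hD.r_directed t ht (φ.symm s)
    rw [hφ, Homeomorph.apply_symm_apply] at h1
    exact h1
  have hBadd : ∀ t u s, B (t + u) s = B t (B u s) := by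
    intro t u s
    show ψ (D'.act (0, t + u) (ψ.symm s)) =
      ψ (D'.act (0, t) (ψ.symm (ψ (D'.act (0, u) (ψ.symm s)))))
    rw [Homeomorph.symm_apply_apply,
      show ((0 : ℤ), t + u) = ((0 : ℤ), t) + ((0 : ℤ), u) by rw [Prod.mk_add_mk, add_zero],
      hD'.act_add]
  have hBle : ∀ t s, 0 ≤ t → s ≤ B t s := by
    intro t s ht
    have h1 := hD'.r_directed t ht (ψ.symm s)
    rw [hψ, Homeomorph.apply_symm_apply] at h1
    exact h1
  have hF : Continuous F := ψ.continuous.comp (hf.comp φ.symm.continuous)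
  have heqF : ∀ t s, F (A t s) = B t (F s) := by
    intro t s
    show ψ (f (φ.symm (φ (D.act (0, t) (φ.symm s))))) =
      ψ (D'.act (0, t) (ψ.symm (ψ (f (φ.symm s)))))
    rw [Homeomorph.symm_apply_apply, Homeomorph.symm_apply_apply, heq]
  have hfixmem : ∀ r : ℝ, (∀ t, A t r = r) → φ.symm r ∈ D.rFixed := by
    intro r hr t
    have h1 : φ (D.act (0, t) (φ.symm r)) = r := hr t
    calc D.act (0, t) (φ.symm r) = φ.symm (φ (D.act (0, t) (φ.symm r))) :=
          (φ.symm_apply_apply _).symm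
      _ = φ.symm r := by rw [h1]
  have hdisc : ∀ p, (∀ t, A t p = p) →
      ∃ ε > 0, ∀ q ∈ Set.Ioo (p - ε) (p + ε), (∀ t, A t q = q) → q = p := by
    intro p hp
    have hxp : φ.symm p ∈ D.rFixed := hfixmem p hp
    haveI := hD.fixed_discrete
    have h1 : ({(⟨φ.symm p, hxp⟩ : D.rFixed)} : Set D.rFixed) ∈
        𝓝 (⟨φ.symm p, hxp⟩ : D.rFixed) := by
      rw [nhds_discrete]
      exact Filter.mem_pure.2 rfl
    rw [nhds_subtype] at h1
    obtain ⟨U, hU, hU2⟩ := h1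
    have hW : φ.symm ⁻¹' U ∈ 𝓝 p :=
      φ.symm.continuous.continuousAt.preimage_mem_nhds hU
    obtain ⟨ε, hε, hball⟩ := Metric.mem_nhds_iff.1 hW
    refine ⟨ε, hε, ?_⟩
    intro q hq hqfix
    have hxq : φ.symm q ∈ D.rFixed := hfixmem q hqfix
    have hqU : φ.symm q ∈ U := hball (by rw [Real.ball_eq_Ioo]; exact hq)
    have h2 : (⟨φ.symm q, hxq⟩ : D.rFixed) = ⟨φ.symm p, hxp⟩ :=
      hU2 (show (⟨φ.symm q, hxq⟩ : D.rFixed) ∈ Subtype.val ⁻¹' U from hqU)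
    have h3 : φ.symm q = φ.symm p := congrArg Subtype.val h2
    exact φ.symm.injective h3
  have hmono : Monotone F := BPAux.key h0 hadd hcont hle hBadd hBle hF heqF hdisc
  intro x y hxy
  have h4 := hmono ((hφ x y).1 hxy)
  show D'.le (f x) (f y)
  rw [hψ]
  have h5 : ∀ z : L, F (φ z) = ψ (f z) := by
    intro z
    show ψ (f (φ.symm (φ z))) = ψ (f z)
    rw [Homeomorph.symm_apply_apply]
  rw [← h5 x, ← h5 y]
  exact h4

end
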